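/- Let G be a finite group with periodic cohomology admitting surjections onto generalised quaternion groups Q_{4a} and Q_{4b} with a, b > 1 odd, arising as quotients of a metacyclic group C_m ⋊_{(r)} C_{4n} structure (m odd). Then G also surjects onto Q_{4d} where d = lcm(a, b), and consequently G has at most one maximal binary polyhedral quotient up to equivalence of quotients. -/

import Mathlib

set_option maxHeartbeats 1000000

section gen
variable {H : Type*} [Group H]

lemma conj_pow_pow {p q : H} {R : ℕ} (hpq : q * p * q⁻¹ = p ^ R) (j k : ℕ) :
    q ^ j * p ^ k * (q ^ j)⁻¹ = p ^ (k * R ^ j) := by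
  induction j with
  | zero => simp
  | succ j ih =>
      have h1 : q ^ (j+1) * p ^ k * (q ^ (j+1))⁻¹
          = q * (q ^ j * p ^ k * (q ^ j)⁻¹) * q⁻¹ := by
        rw [pow_succ']; group
      rw [h1, ih]
      have h2 : q * p ^ (k * R ^ j) * q⁻¹ = (q * p * q⁻¹) ^ (k * R ^ j) := by
        rw [conj_pow]
      rw [h2, hpq, ← pow_mul]
      ring_nf

lemma swap_pow {p q : H} {R : ℕ} (hpq : q * p * q⁻¹ = p ^ R) (j k : ℕ) :
    q ^ j * p ^ k = p ^ (k * R ^ j) * q ^ j := by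
  have := conj_pow_pow hpq j k
  group at this ⊢
  rw [← this]
  group

lemma genForm {M N R : ℕ} (hM : 0 < M) (hN : 0 < N) {p q : H}
    (hp : p ^ M = 1) (hq : q ^ N = 1) (hpq : q * p * q⁻¹ = p ^ R)
    (hgen : Subgroup.closure {p, q} = ⊤) (w : H) :
    ∃ i j : ℕ, w = p ^ i * q ^ j := by
  have hpinv : p⁻¹ = p ^ (M - 1) := by
    rw [eq_comm, eq_inv_iff_mul_eq_one, ← pow_succ, Nat.sub_add_cancel hM, hp]
  have hqinv : q⁻¹ = q ^ (N - 1) := by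
    rw [eq_comm, eq_inv_iff_mul_eq_one, ← pow_succ, Nat.sub_add_cancel hN, hq]
  set T : Subgroup H :=
    { carrier := {w | ∃ i j : ℕ, w = p ^ i * q ^ j}
      one_mem' := ⟨0, 0, by simp⟩
      mul_mem' := by
        rintro x y ⟨i, j, rfl⟩ ⟨k, l, rfl⟩
        refine ⟨i + k * R ^ j, j + l, ?_⟩
        calc p ^ i * q ^ j * (p ^ k * q ^ l)
            = p ^ i * (q ^ j * p ^ k) * q ^ l := by group
          _ = p ^ i * (p ^ (k * R ^ j) * q ^ j) * q ^ l := by rw [swap_pow hpq]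
          _ = p ^ (i + k * R ^ j) * q ^ (j + l) := by rw [pow_add, pow_add]; group
      inv_mem' := by
        rintro x ⟨i, j, rfl⟩
        refine ⟨i * (M - 1) * R ^ (j * (N - 1)), j * (N - 1), ?_⟩
        have h1 : (p ^ i * q ^ j)⁻¹ = q ^ (j * (N - 1)) * p ^ (i * (M - 1)) := by
          rw [mul_inv_rev, ← inv_pow, ← inv_pow, hpinv, hqinv, ← pow_mul, ← pow_mul,
            Nat.mul_comm (N-1) j, Nat.mul_comm (M-1) i]
        rw [h1, swap_pow hpq] } with hT
  have : w ∈ T := by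
    have h2 : Subgroup.closure {p, q} ≤ T := by
      rw [Subgroup.closure_le]
      rintro x (rfl | rfl)
      · exact ⟨1, 0, by simp⟩
      · exact ⟨0, 1, by simp⟩
    rw [hgen] at h2
    exact h2 (Subgroup.mem_top w)
  exact this

lemma genSurj {M N R : ℕ} (hM : 0 < M) (hN : 0 < N) {p q : H}
    (hp : p ^ M = 1) (hq : q ^ N = 1) (hpq : q * p * q⁻¹ = p ^ R)
    (hgen : Subgroup.closure {p, q} = ⊤) :
    Function.Surjective (fun z : ZMod M × ZMod N => p ^ z.1.val * q ^ z.2.val) := by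
  haveI : NeZero M := ⟨hM.ne'⟩
  haveI : NeZero N := ⟨hN.ne'⟩
  intro w
  obtain ⟨i, j, rfl⟩ := genForm hM hN hp hq hpq hgen w
  refine ⟨((i : ZMod M), (j : ZMod N)), ?_⟩
  simp only [ZMod.val_natCast]
  rw [← Nat.div_add_mod i M, ← Nat.div_add_mod j N, pow_add, pow_add, pow_mul, hp, one_pow,
    one_mul, Nat.mul_add_mod, Nat.mul_add_mod, pow_mul, hq, one_pow, one_mul,
    Nat.mod_mod_of_dvd _ dvd_rfl]
  congr 2
  exact Nat.mod_mod_of_dvd _ dvd_rfl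

lemma cardLe {M N R : ℕ} (hM : 0 < M) (hN : 0 < N) {p q : H}
    (hp : p ^ M = 1) (hq : q ^ N = 1) (hpq : q * p * q⁻¹ = p ^ R)
    (hgen : Subgroup.closure {p, q} = ⊤) :
    Finite H ∧ Nat.card H ≤ M * N := by
  haveI : NeZero M := ⟨hM.ne'⟩
  haveI : NeZero N := ⟨hN.ne'⟩
  have hs := genSurj hM hN hp hq hpq hgen
  haveI : Finite H := Finite.of_surjective _ hs
  refine ⟨inferInstance, ?_⟩
  have := Nat.card_le_card_of_surjective _ hs
  simpa [Nat.card_prod] using this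


end gen



open Quaternion



lemma quat_re_mul_comm (p q : Quaternion ℝ) : (p * q).re = (q * p).re := by
  simp only [Quaternion.re_mul]
  ring

lemma quat_comm_mem {x w : Quaternion ℝ} (hx : ¬(x.imI = 0 ∧ x.imJ = 0 ∧ x.imK = 0))
    (h : w * x = x * w) : ∃ α β : ℝ, w = (α : Quaternion ℝ) + β • x := by
  have e1 : w.imJ * x.imK = w.imK * x.imJ := by
    have := congrArg QuaternionAlgebra.imI h
    simp only [Quaternion.imI_mul] at this; nlinarith [this]
  have e2 : w.imK * x.imI = w.imI * x.imK := by
    have := congrArg QuaternionAlgebra.imJ h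
    simp only [Quaternion.imJ_mul] at this; nlinarith [this]
  have e3 : w.imI * x.imJ = w.imJ * x.imI := by
    have := congrArg QuaternionAlgebra.imK h
    simp only [Quaternion.imK_mul] at this; nlinarith [this]
  have key : ∃ β : ℝ, w.imI = β * x.imI ∧ w.imJ = β * x.imJ ∧ w.imK = β * x.imK := by
    by_cases hI : x.imI ≠ 0
    · refine ⟨w.imI / x.imI, by field_simp, ?_, ?_⟩
      · rw [div_mul_eq_mul_div, eq_div_iff hI, mul_comm w.imJ x.imI]
        linarith [e3]
      · rw [div_mul_eq_mul_div, eq_div_iff hI, mul_comm w.imK x.imI]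
        linarith [e2]
    · push_neg at hI
      by_cases hJ : x.imJ ≠ 0
      · refine ⟨w.imJ / x.imJ, ?_, by field_simp, ?_⟩
        · rw [hI, mul_zero]
          have h3' := e3
          rw [hI, mul_zero] at h3'
          exact (mul_eq_zero.mp h3').resolve_right hJ
        · rw [div_mul_eq_mul_div, eq_div_iff hJ, mul_comm w.imK x.imJ]
          linarith [e1]
      · push_neg at hJ
        have hK : x.imK ≠ 0 := by tauto
        refine ⟨w.imK / x.imK, ?_, ?_, by field_simp⟩
        · rw [hI, mul_zero]
          have h2' := e2
          rw [hI, mul_zero] at h2'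
          exact (mul_eq_zero.mp h2'.symm).resolve_right hK
        · rw [hJ, mul_zero]
          have h1' := e1
          rw [hJ, mul_zero] at h1'
          exact (mul_eq_zero.mp h1').resolve_right hK
  obtain ⟨β, h1, h2, h3⟩ := key
  refine ⟨w.re - β * x.re, β, ?_⟩
  ext <;> simp [h1, h2, h3] <;> ring

lemma quat_pow_norm_one {x : Quaternion ℝ} {k : ℕ} (hk : 0 < k) (h : x ^ k = 1) :
    normSq x = 1 := by
  have h1 : normSq x ^ k = 1 := by
    rw [← map_pow, h, map_one]
  have h0 : 0 ≤ normSq x := normSq_nonneg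
  rcases lt_trichotomy (normSq x) 1 with hlt | heq | hgt
  · have := pow_lt_one₀ h0 hlt hk.ne'
    simp [h1] at this
  · exact heq
  · have := one_lt_pow₀ hgt hk.ne'
    simp [h1] at this

lemma quat_dichotomy {x w : Quaternion ℝ} (hx : ¬(x.imI = 0 ∧ x.imJ = 0 ∧ x.imK = 0))
    (hnx : normSq x = 1) (hnw : normSq w = 1) (hre : w.re = x.re)
    (hcomm : w * x = x * w) : w = x ∨ w = star x := by
  obtain ⟨α, β, rfl⟩ := quat_comm_mem hx hcomm
  have hS : 0 < x.imI ^ 2 + x.imJ ^ 2 + x.imK ^ 2 := by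
    by_contra hc
    push_neg at hc
    exact hx ⟨by nlinarith [sq_nonneg x.imI, sq_nonneg x.imJ, sq_nonneg x.imK],
      by nlinarith [sq_nonneg x.imI, sq_nonneg x.imJ, sq_nonneg x.imK],
      by nlinarith [sq_nonneg x.imI, sq_nonneg x.imJ, sq_nonneg x.imK]⟩
  rw [normSq_def'] at hnx hnw
  simp only [Quaternion.re_add, Quaternion.re_coe, Quaternion.re_smul,
    Quaternion.imI_add, Quaternion.imI_coe, Quaternion.imI_smul,
    Quaternion.imJ_add, Quaternion.imJ_coe, Quaternion.imJ_smul,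
    Quaternion.imK_add, Quaternion.imK_coe, Quaternion.imK_smul, smul_eq_mul] at hnw hre
  have hβ : β = 1 ∨ β = -1 := by
    have h5 : (β ^ 2 - 1) * (x.imI ^ 2 + x.imJ ^ 2 + x.imK ^ 2) = 0 := by
      linear_combination hnw - hnx - (α + β * x.re + x.re) * hre
    have h6 : β ^ 2 - 1 = 0 := by
      rcases mul_eq_zero.mp h5 with h | h
      · exact h
      · exact absurd h hS.ne'
    have : (β - 1) * (β + 1) = 0 := by nlinarith [h6]
    rcases mul_eq_zero.mp this with h | h
    · left; linarith
    · right; linarith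
  rcases hβ with rfl | rfl
  · left
    have hα : α = 0 := by nlinarith
    ext <;> simp [hα]
  · right
    have hα : α = 2 * x.re := by nlinarith
    ext <;> simp [hα] <;> ring



lemma real_pow_eq_one {t : ℝ} (h0 : 0 ≤ t) {k : ℕ} (hk : 0 < k) (h : t ^ k = 1) :
    t = 1 := by
  rcases lt_trichotomy t 1 with hlt | heq | hgt
  · have := pow_lt_one₀ h0 hlt hk.ne'
    simp [h] at this
  · exact heq
  · have := one_lt_pow₀ hgt hk.ne'
    simp [h] at this

lemma comm_closure_isCyclic {x y : (Quaternion ℝ)ˣ}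
    (hfin : Finite (Subgroup.closure ({x, y} : Set (Quaternion ℝ)ˣ)))
    (hxy : Commute x y) : IsCyclic (Subgroup.closure ({x, y} : Set (Quaternion ℝ)ˣ)) := by
  set s : Set (Quaternion ℝ) := {↑x, ↑y, ↑(x⁻¹), ↑(y⁻¹)} with hs
  set A : Subring (Quaternion ℝ) := Subring.closure s with hA
  have hgencomm : ∀ p ∈ s, ∀ q ∈ s, p * q = q * p := by
    have h1 : Commute (x : Quaternion ℝ) ↑y := congrArg Units.val hxy
    have h2 : Commute (x : Quaternion ℝ) ↑(y⁻¹) := by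
      have := (hxy.inv_right); exact congrArg Units.val this
    have h3 : Commute ((x⁻¹ : (Quaternion ℝ)ˣ) : Quaternion ℝ) ↑y := by
      have := (hxy.inv_left); exact congrArg Units.val this
    have h4 : Commute ((x⁻¹ : (Quaternion ℝ)ˣ) : Quaternion ℝ) ↑(y⁻¹) := by
      have := (hxy.inv_left.inv_right); exact congrArg Units.val this
    have h5 : Commute (x : Quaternion ℝ) ↑(x⁻¹) := by
      have : Commute x x⁻¹ := (Commute.refl x).inv_right
      exact congrArg Units.val this
    have h6 : Commute (y : Quaternion ℝ) ↑(y⁻¹) := by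
      have : Commute y y⁻¹ := (Commute.refl y).inv_right
      exact congrArg Units.val this
    rintro p (rfl | rfl | rfl | rfl) q (rfl | rfl | rfl | rfl) <;>
      first
        | rfl
        | exact h1 | exact h1.symm | exact h2 | exact h2.symm
        | exact h3 | exact h3.symm | exact h4 | exact h4.symm
        | exact h5 | exact h5.symm | exact h6 | exact h6.symm
  have hcommA : ∀ p ∈ A, ∀ q ∈ A, p * q = q * p := by
    intro p hp q hq
    induction hp, hq using Subring.closure_induction₂ with
    | mem_mem a b ha hb => exact hgencomm a ha b hb
    | zero_left => simp
    | zero_right => simp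
    | one_left => simp
    | one_right => simp
    | neg_left _ _ _ _ ih => simp [neg_mul, mul_neg, ih]
    | neg_right _ _ _ _ ih => simp [neg_mul, mul_neg, ih]
    | add_left _ _ _ _ _ _ ih1 ih2 => rw [add_mul, mul_add, ih1, ih2]
    | add_right _ _ _ _ _ _ ih1 ih2 => rw [add_mul, mul_add, ih1, ih2]
    | mul_left a b c _ _ _ ih1 ih2 => rw [mul_assoc, ih2, ← mul_assoc, ih1, mul_assoc]
    | mul_right a b c _ _ _ ih1 ih2 => rw [← mul_assoc, ih1, mul_assoc, ih2, ← mul_assoc]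
  have hmem : ∀ w ∈ Subgroup.closure ({x, y} : Set (Quaternion ℝ)ˣ),
      ((w : Quaternion ℝ) ∈ A ∧ ((w⁻¹ : (Quaternion ℝ)ˣ) : Quaternion ℝ) ∈ A) := by
    intro w hw
    induction hw using Subgroup.closure_induction with
    | mem z hz =>
        rcases hz with rfl | rfl
        · exact ⟨Subring.subset_closure (by simp [s]), Subring.subset_closure (by simp [s])⟩
        · exact ⟨Subring.subset_closure (by simp [s]), Subring.subset_closure (by simp [s])⟩
    | one => exact ⟨by simpa using A.one_mem, by simpa using A.one_mem⟩
    | mul a b _ _ iha ihb =>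
        refine ⟨by simp [A.mul_mem iha.1 ihb.1], ?_⟩
        rw [mul_inv_rev]
        exact A.mul_mem ihb.2 iha.2
    | inv a _ iha => exact ⟨iha.2, by simpa using iha.1⟩
  letI : CommRing A := { (inferInstance : Ring A) with
    mul_comm := fun a b => Subtype.ext (hcommA a a.2 b b.2) }
  haveI : IsDomain A := Function.Injective.isDomain A.subtype Subtype.val_injective
  set T := Subgroup.closure ({x, y} : Set (Quaternion ℝ)ˣ)
  set f : T →* A :=
    { toFun := fun w => ⟨(w : (Quaternion ℝ)ˣ), (hmem w w.2).1⟩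
      map_one' := by
        apply Subtype.ext
        simp
      map_mul' := fun a b => by
        apply Subtype.ext
        simp }
  have hfinj : Function.Injective f := by
    intro a b hab
    have : ((a : (Quaternion ℝ)ˣ) : Quaternion ℝ) = ((b : (Quaternion ℝ)ˣ) : Quaternion ℝ) :=
      congrArg Subtype.val hab
    exact Subtype.ext (Units.ext this)
  exact isCyclic_of_subgroup_isDomain f hfinj

lemma master {G : Type} [Group G] [Finite G] {m n r : ℕ} (hm : Odd m) (hn : 1 ≤ n)
    {u v : G} (hu : orderOf u = m) (hv : orderOf v = 4 * n)
    (hrel : v * u * v⁻¹ = u ^ r) (hgen : Subgroup.closure {u, v} = ⊤)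
    (φ : G →* (Quaternion ℝ)ˣ) (hnc : ¬ IsCyclic φ.range) :
    1 < orderOf (φ u) ∧ orderOf (φ u) ∣ m ∧ orderOf (φ u) ∣ (r + 1) ∧
      φ.ker = Subgroup.closure {u ^ orderOf (φ u), v ^ 4} := by
  have hm1 : 0 < m := hm.pos
  have hn1 : 0 < 4 * n := by omega
  have hum : u ^ m = 1 := by rw [← hu]; exact pow_orderOf_eq_one u
  have hvn : v ^ (4 * n) = 1 := by rw [← hv]; exact pow_orderOf_eq_one v
  set x := φ u with hx
  set y := φ v with hy
  have hxm : x ^ m = 1 := by rw [← map_pow, hum, map_one]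
  have hyn : y ^ (4 * n) = 1 := by rw [← map_pow, hvn, map_one]
  set c := orderOf x with hc
  have hcm : c ∣ m := orderOf_dvd_of_pow_eq_one hxm
  have hc0 : 0 < c := Nat.pos_of_dvd_of_pos hcm hm1
  have hcodd : Odd c := hm.of_dvd_nat hcm
  have hrange : φ.range = Subgroup.closure {x, y} := by
    rw [MonoidHom.range_eq_map, ← hgen, MonoidHom.map_closure, Set.image_pair]
  have hconj : y * x * y⁻¹ = x ^ r := by
    rw [hx, hy, ← map_inv, ← map_mul, ← map_mul, hrel, map_pow]
  have hfinT : Finite (Subgroup.closure ({x, y} : Set (Quaternion ℝ)ˣ)) := by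
    rw [← hrange]
    exact Finite.of_surjective φ.rangeRestrict φ.rangeRestrict_surjective
  -- rule out x y commuting
  have hnotcomm : ¬ Commute x y := by
    intro hcomm
    exact hnc (hrange ▸ comm_closure_isCyclic hfinT hcomm)
  -- c = 1 would give commuting
  have hc1 : c ≠ 1 := by
    intro h1
    have : x = 1 := orderOf_eq_one_iff.mp (hc ▸ h1)
    exact hnotcomm (this ▸ Commute.one_left y)
  have hc2 : c ≠ 2 := by
    intro h2
    rw [h2] at hcodd
    exact (Nat.not_odd_iff_even.mpr (by decide)) hcodd
  set X : Quaternion ℝ := (x : Quaternion ℝ) with hX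
  set Y : Quaternion ℝ := (y : Quaternion ℝ) with hY
  have hXc : X ^ c = 1 := by
    rw [hX, ← Units.val_pow_eq_pow_val, pow_orderOf_eq_one, Units.val_one]
  have hx2 : x ^ 2 ≠ 1 := by
    intro h
    have hdvd : c ∣ 2 := orderOf_dvd_of_pow_eq_one h
    rcases (Nat.dvd_prime Nat.prime_two).mp hdvd with h' | h'
    · exact hc1 h'
    · exact hc2 h'
  have hX2 : X ^ 2 ≠ 1 := by
    intro h
    apply hx2
    apply Units.ext
    rw [Units.val_pow_eq_pow_val, Units.val_one]
    exact h
  have hXnr : ¬(X.imI = 0 ∧ X.imJ = 0 ∧ X.imK = 0) := by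
    rintro ⟨h1, h2, h3⟩
    have hXre : X = ((X.re : ℝ) : Quaternion ℝ) := by ext <;> simp [h1, h2, h3]
    have htc : (X.re) ^ c = 1 := by
      have h9 : ((X.re ^ c : ℝ) : Quaternion ℝ) = ((1 : ℝ) : Quaternion ℝ) := by
        rw [Quaternion.coe_pow, ← hXre, hXc, Quaternion.coe_one]
      exact Quaternion.coe_injective h9
    have habs : |X.re| = 1 := by
      have : |X.re| ^ c = 1 := by
        rw [← abs_pow, htc, abs_one]
      exact real_pow_eq_one (abs_nonneg _) hc0 this
    rcases abs_eq (by norm_num : (0:ℝ) ≤ 1) |>.mp habs with h | h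
    · apply hc1
      have : X = 1 := by rw [hXre, h]; norm_num
      have hx1 : x = 1 := Units.ext this
      rw [hc, hx1, orderOf_one]
    · have : X.re ^ c = -1 := by rw [h, hcodd.neg_one_pow]
      rw [htc] at this
      norm_num at this
  have hnormX : Quaternion.normSq X = 1 := quat_pow_norm_one hc0 hXc
  -- the conjugate X^r
  have hXr_eq : (↑(x ^ r) : Quaternion ℝ) = Y * X * Y⁻¹ := by
    rw [← hconj]
    push_cast
    rfl
  have hYne : Y ≠ 0 := Units.ne_zero y
  have hre : ((x ^ r : (Quaternion ℝ)ˣ) : Quaternion ℝ).re = X.re := by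
    rw [hXr_eq, quat_re_mul_comm (Y * X) Y⁻¹, ← mul_assoc, inv_mul_cancel₀ hYne, one_mul]
  have hcommXr : ((x ^ r : (Quaternion ℝ)ˣ) : Quaternion ℝ) * X = X * ↑(x ^ r) := by
    push_cast
    rw [← pow_succ, ← pow_succ']
  have hnormXr : Quaternion.normSq ((x ^ r : (Quaternion ℝ)ˣ) : Quaternion ℝ) = 1 := by
    push_cast
    rw [map_pow, hnormX, one_pow]
  have hdich := quat_dichotomy hXnr hnormX hnormXr hre hcommXr
  have hxr : x ^ r = x⁻¹ := by
    rcases hdich with h | h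
    · exfalso
      apply hnotcomm
      have hxx : x ^ r = x := Units.ext h
      rw [hxx] at hconj
      have : y * x = x * y := by
        have := congrArg (· * y) hconj
        simpa [mul_assoc] using this
      exact this.symm
    · -- star X = X⁻¹
      have hstar : star X = X⁻¹ := by
        have h1 : X * star X = 1 := by
          rw [Quaternion.self_mul_star, hnormX]
          norm_num
        exact eq_inv_of_mul_eq_one_right h1
      apply Units.ext
      rw [Units.val_pow_eq_pow_val]
      show X ^ r = _
      rw [(by exact_mod_cast h : X ^ r = star X), hstar]
      simp [hX]
  have hcr : c ∣ (r + 1) := by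
    apply orderOf_dvd_of_pow_eq_one
    rw [pow_succ, hxr, inv_mul_cancel]
  have hXne : X ≠ 0 := Units.ne_zero x
  have hXinv_ne : X ≠ X⁻¹ := by
    intro h
    apply hX2
    rw [sq]
    nth_rewrite 2 [h]
    exact mul_inv_cancel₀ hXne
  have hXrinv : X ^ r = X⁻¹ := by
    calc X ^ r = ((x ^ r : (Quaternion ℝ)ˣ) : Quaternion ℝ) := (Units.val_pow_eq_pow_val x r).symm
      _ = ((x⁻¹ : (Quaternion ℝ)ˣ) : Quaternion ℝ) := by rw [hxr]
      _ = X⁻¹ := by simp [hX]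
  -- y^2 is -1
  have hy2 : y ^ 2 = -1 := by
    have hcomm2 : (↑(y ^ 2) : Quaternion ℝ) * X = X * ↑(y ^ 2) := by
      have h1 : y ^ 2 * x * (y ^ 2)⁻¹ = x := by
        have e1 : y * x * y⁻¹ = x⁻¹ := by rw [hconj, hxr]
        have e2 : y * x⁻¹ * y⁻¹ = x := by
          apply inv_injective
          conv_rhs => rw [← e1]
          group
        calc y ^ 2 * x * (y ^ 2)⁻¹ = y * (y * x * y⁻¹) * y⁻¹ := by
              rw [sq]
              group
          _ = y * x⁻¹ * y⁻¹ := by rw [e1]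
          _ = x := e2
      have := congrArg Units.val h1
      push_cast at this
      calc (↑(y ^ 2) : Quaternion ℝ) * X = (↑(y ^ 2 * x) : Quaternion ℝ) := by push_cast; rfl
        _ = (↑(x * y ^ 2) : Quaternion ℝ) := by
            congr 1
            have h2 : y ^ 2 * x = x * y ^ 2 := by
              have h3 := congrArg (· * (y^2)) h1
              simpa [mul_assoc] using h3
            exact h2
        _ = X * ↑(y ^ 2) := by push_cast; rfl
    obtain ⟨α, β, hαβ⟩ := quat_comm_mem hXnr hcomm2
    -- conjugate y^2 by y
    have hβ0 : β = 0 := by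
      by_contra hβ
      apply hXinv_ne
      have h1 : Y * ((α : Quaternion ℝ) + β • X) * Y⁻¹ = (α : Quaternion ℝ) + β • X := by
        rw [← hαβ]
        have : Y * ↑(y ^ 2) = ↑(y ^ 2) * Y := by
          push_cast
          rw [← pow_succ, ← pow_succ']
        rw [this, mul_assoc, mul_inv_cancel₀ hYne, mul_one]
      have h2 : Y * ((α : Quaternion ℝ) + β • X) * Y⁻¹
          = (α : Quaternion ℝ) + β • (Y * X * Y⁻¹) := by
        rw [mul_add, add_mul]
        congr 1
        · rw [show Y * (α : Quaternion ℝ) = (α : Quaternion ℝ) * Y from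
              (Quaternion.coe_commutes α Y).symm, mul_assoc, mul_inv_cancel₀ hYne, mul_one]
        · rw [mul_smul_comm, smul_mul_assoc]
      have h3 : Y * X * Y⁻¹ = X⁻¹ := by
        rw [← hXr_eq]
        calc ((x ^ r : (Quaternion ℝ)ˣ) : Quaternion ℝ) = X ^ r := Units.val_pow_eq_pow_val x r
          _ = X⁻¹ := hXrinv
      rw [h2, h3] at h1
      have h4 : β • (X : Quaternion ℝ) = β • X⁻¹ := by
        have := h1
        exact (add_left_cancel h1).symm
      have := smul_right_injective (Quaternion ℝ) hβ h4
      exact this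
    rw [hβ0, zero_smul, add_zero] at hαβ
    have hαpow : α ^ (2 * n) = 1 := by
      have h1 : (y ^ 2) ^ (2 * n) = 1 := by
        rw [← pow_mul]
        have : 2 * (2 * n) = 4 * n := by ring
        rw [this, hyn]
      have h2 := congrArg Units.val h1
      rw [Units.val_pow_eq_pow_val, hαβ, ← Quaternion.coe_pow, Units.val_one] at h2
      rw [show (1 : Quaternion ℝ) = ((1 : ℝ) : Quaternion ℝ) from (Quaternion.coe_one).symm] at h2
      exact Quaternion.coe_injective h2
    have hα2 : α ^ 2 = 1 := by
      have h0 : (α ^ 2) ^ n = 1 := by rw [← pow_mul]; exact hαpow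
      have := real_pow_eq_one (sq_nonneg α) (by omega : 0 < n) h0
      exact this
    have hαval : α = 1 ∨ α = -1 := by
      have h8 : (α - 1) * (α + 1) = 0 := by nlinarith [hα2]
      rcases mul_eq_zero.mp h8 with h | h
      · left; linarith
      · right; linarith
    rcases hαval with rfl | rfl
    · exfalso
      -- y^2 = 1, so y = ±1 central, contradiction
      have hY2 : Y ^ 2 = 1 := by
        rw [← Units.val_pow_eq_pow_val, hαβ, Quaternion.coe_one]
      have : (Y - 1) * (Y + 1) = 0 := by
        have : (Y - 1) * (Y + 1) = Y ^ 2 - 1 := by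
          rw [sub_mul, mul_add, mul_add, sq]
          simp only [one_mul, mul_one]
          abel
        rw [this, hY2, sub_self]
      have hYpm : Y = 1 ∨ Y = -1 := by
        rcases mul_eq_zero.mp this with h | h
        · left; exact eq_of_sub_eq_zero h
        · right; exact eq_neg_of_add_eq_zero_left h
      apply hXinv_ne
      have h7 : Y * X * Y⁻¹ = X⁻¹ := by
        rw [← hXr_eq]
        calc ((x ^ r : (Quaternion ℝ)ˣ) : Quaternion ℝ) = X ^ r := Units.val_pow_eq_pow_val x r
          _ = X⁻¹ := hXrinv
      rcases hYpm with h | h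
      · rw [h] at h7
        simpa using h7
      · rw [h] at h7
        simp only [neg_mul, one_mul, mul_neg, neg_neg, inv_neg, inv_one] at h7
        simpa using h7
    · apply Units.ext
      rw [show ((-1 : (Quaternion ℝ)ˣ) : Quaternion ℝ) = -1 by simp]
      rw [show ((y ^ 2 : (Quaternion ℝ)ˣ) : Quaternion ℝ) = ((-1 : ℝ) : Quaternion ℝ) from hαβ]
      push_cast
      ring
  have hy4 : y ^ 4 = 1 := by
    have h9 : y ^ 4 = (y ^ 2) ^ 2 := by rw [← pow_mul]
    rw [h9, hy2]
    simp
  -- kernel computation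
  have hkerK : φ.ker = Subgroup.closure {u ^ c, v ^ 4} := by
    apply le_antisymm
    · intro w hw
      obtain ⟨i, j, rfl⟩ := genForm hm1 hn1 hum hvn hrel hgen w
      have hφw : x ^ i * y ^ j = 1 := by
        have := hw
        rw [MonoidHom.mem_ker, map_mul, map_pow, map_pow] at this
        exact this
      have hyj : y ^ j = y ^ (j % 4) := by
        conv_lhs => rw [← Nat.div_add_mod j 4]
        rw [pow_add, pow_mul, hy4, one_pow, one_mul]
      rw [hyj] at hφw
      have hmod : j % 4 < 4 := Nat.mod_lt _ (by norm_num)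
      have hxcomm : ∀ k : ℕ, Commute x y → False := fun _ h => hnotcomm h
      have hcase : c ∣ i ∧ 4 ∣ j := by
        interval_cases h : j % 4
        · refine ⟨?_, Nat.dvd_of_mod_eq_zero h⟩
          rw [pow_zero, mul_one] at hφw
          exact orderOf_dvd_of_pow_eq_one hφw
        · exfalso
          rw [pow_one] at hφw
          have h5 : y = (x ^ i)⁻¹ := eq_inv_of_mul_eq_one_right hφw
          apply hnotcomm
          rw [h5]
          exact (Commute.pow_right (Commute.refl x) i).inv_right
        · exfalso
          rw [hy2] at hφw
          have hxi : x ^ i = -1 := by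
            have := congrArg (· * (-1 : (Quaternion ℝ)ˣ)) hφw
            simpa using this
          have h2i : x ^ (2 * i) = 1 := by
            rw [mul_comm 2 i, pow_mul, hxi]
            simp
          have hdvd : c ∣ 2 * i := orderOf_dvd_of_pow_eq_one h2i
          have hcop2 : Nat.Coprime c 2 := hcodd.coprime_two_right
          have hci : c ∣ i := (Nat.Coprime.dvd_of_dvd_mul_left hcop2 hdvd)
          have : x ^ i = 1 := by
            obtain ⟨t, rfl⟩ := hci
            rw [pow_mul, pow_orderOf_eq_one, one_pow]
          rw [this] at hxi
          have h10 := congrArg Units.val hxi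
          rw [Units.val_one] at h10
          have h11 := congrArg QuaternionAlgebra.re h10
          simp at h11
          norm_num at h11
        · exfalso
          rw [pow_succ, ← mul_assoc] at hφw
          -- x^i * y^2 * y = 1
          have : x ^ i * y ^ 2 = y⁻¹ := by
            rw [eq_inv_iff_mul_eq_one]
            exact hφw
          rw [hy2] at this
          have hyeq : y = -(x ^ i)⁻¹ := by
            rw [← inv_inv y, ← this]
            simp [mul_comm]
          apply hnotcomm
          rw [hyeq]
          exact ((Commute.pow_right (Commute.refl x) i).inv_right).neg_right
      obtain ⟨⟨s, rfl⟩, ⟨t, rfl⟩⟩ := hcase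
      rw [pow_mul, pow_mul]
      exact Subgroup.mul_mem _
        (Subgroup.pow_mem _ (Subgroup.subset_closure (by simp)) s)
        (Subgroup.pow_mem _ (Subgroup.subset_closure (by simp)) t)
    · rw [Subgroup.closure_le]
      rintro w (rfl | rfl)
      · have : φ (u ^ c) = 1 := by
          rw [map_pow]
          exact pow_orderOf_eq_one x
        exact this
      · have : φ (v ^ 4) = 1 := by
          rw [map_pow]
          show y ^ 4 = 1
          exact hy4
        exact this
  exact ⟨by omega, hcm, hcr, hkerK⟩
lemma quatQuot {G : Type} [Group G] [Finite G] {m n r : ℕ} (hm : Odd m) (hn : 1 ≤ n)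
    {u v : G} (hu : orderOf u = m) (hv : orderOf v = 4 * n)
    (hrel : v * u * v⁻¹ = u ^ r) (hgen : Subgroup.closure {u, v} = ⊤)
    {q : ℕ} (hq : 1 < q)
    (f : G →* QuaternionGroup q) (hf : Function.Surjective f) :
    q ∣ m ∧ q ∣ (r + 1) := by
  haveI : NeZero q := ⟨by omega⟩
  have hm1 : 0 < m := hm.pos
  have hn1 : 0 < 4 * n := by omega
  have hum : u ^ m = 1 := by rw [← hu]; exact pow_orderOf_eq_one u
  have hvn : v ^ (4 * n) = 1 := by rw [← hv]; exact pow_orderOf_eq_one v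
  set X := f u with hX
  set Y := f v with hY
  have hXm : X ^ m = 1 := by rw [← map_pow, hum, map_one]
  have hYn : Y ^ (4 * n) = 1 := by rw [← map_pow, hvn, map_one]
  have hconj : Y * X * Y⁻¹ = X ^ r := by
    rw [hX, hY, ← map_inv, ← map_mul, ← map_mul, hrel, map_pow]
  have hclosure : Subgroup.closure ({X, Y} : Set (QuaternionGroup q)) = ⊤ := by
    rw [← Set.image_pair, ← MonoidHom.map_closure, hgen, ← MonoidHom.range_eq_map]
    exact MonoidHom.range_eq_top.mpr hf
  set c := orderOf X with hc
  have hcm : c ∣ m := orderOf_dvd_of_pow_eq_one hXm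
  have hc0 : 0 < c := Nat.pos_of_dvd_of_pos hcm hm1
  have hcodd : Odd c := hm.of_dvd_nat hcm
  -- X must be of the form a k
  obtain ⟨k, hk⟩ : ∃ k, X = QuaternionGroup.a k := by
    rcases hXa : X with k | k
    · exact ⟨k, rfl⟩
    · exfalso
      have : c = 4 := by rw [hc, hXa, QuaternionGroup.orderOf_xa]
      rw [this] at hcodd
      exact (by decide : ¬ Odd 4) hcodd
  -- Y must be of the form xa l
  obtain ⟨l, hl⟩ : ∃ l, Y = QuaternionGroup.xa l := by
    rcases hYa : Y with l | l
    · exfalso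
      set AQ : Subgroup (QuaternionGroup q) :=
        { carrier := {w | ∃ i, w = QuaternionGroup.a i}
          one_mem' := ⟨0, rfl⟩
          mul_mem' := by
            rintro w₁ w₂ ⟨i, rfl⟩ ⟨j, rfl⟩
            exact ⟨i + j, by rw [QuaternionGroup.a_mul_a]⟩
          inv_mem' := by
            rintro w ⟨i, rfl⟩
            refine ⟨-i, ?_⟩
            have h1 : QuaternionGroup.a i * QuaternionGroup.a (-i) = 1 := by
              rw [QuaternionGroup.a_mul_a, add_neg_cancel, QuaternionGroup.one_def]
            exact inv_eq_of_mul_eq_one_right h1 } with hAQ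
      have hsub : Subgroup.closure ({X, Y} : Set (QuaternionGroup q)) ≤ AQ := by
        rw [Subgroup.closure_le]
        rintro w (rfl | rfl)
        · exact ⟨k, hk⟩
        · exact ⟨l, hYa⟩
      rw [hclosure] at hsub
      obtain ⟨i, hi⟩ := hsub (Subgroup.mem_top (QuaternionGroup.xa 0))
      cases hi
    · exact ⟨l, rfl⟩
  have hY4 : Y ^ 4 = 1 := by rw [hl]; exact QuaternionGroup.xa_pow_four l
  -- conjugation inverts
  have hconj' : Y * X * Y⁻¹ = QuaternionGroup.a (-k) := by
    have hinv : Y⁻¹ = QuaternionGroup.xa ((q : ZMod (2 * q)) + l) := by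
      rw [hl, eq_comm, eq_inv_iff_mul_eq_one, QuaternionGroup.xa_mul_xa]
      rw [QuaternionGroup.one_def]; congr 1; ring
    rw [hinv, hl, hk, QuaternionGroup.xa_mul_a, QuaternionGroup.xa_mul_xa]
    congr 1
    have hq2 : ((q : ZMod (2 * q)) * 2) = 0 := by
      have h0 : ((2 * q : ℕ) : ZMod (2 * q)) = 0 := ZMod.natCast_self _
      push_cast at h0
      linear_combination h0
    linear_combination hq2
  have hcr : c ∣ (r + 1) := by
    apply orderOf_dvd_of_pow_eq_one
    rw [pow_succ, ← hconj, hconj', hk, QuaternionGroup.a_mul_a, neg_add_cancel,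
      QuaternionGroup.one_def]
  -- counting: card ≤ 4 c
  have hcards := cardLe hc0 (by norm_num : (0:ℕ) < 4) (pow_orderOf_eq_one X) hY4 hconj hclosure
  have hcard4q : Nat.card (QuaternionGroup q) = 4 * q := by
    rw [Nat.card_eq_fintype_card, QuaternionGroup.card]
  have hqc : q ≤ c := by
    have := hcards.2
    rw [hcard4q] at this
    omega
  have hc2q : c ∣ 2 * q := by
    apply orderOf_dvd_of_pow_eq_one
    rw [hk]
    have h1 : QuaternionGroup.a k = (QuaternionGroup.a 1 : QuaternionGroup q) ^ (ZMod.val k) := by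
      rw [QuaternionGroup.a_one_pow, ZMod.natCast_zmod_val]
    rw [h1, ← pow_mul, mul_comm (ZMod.val k) (2 * q), pow_mul, QuaternionGroup.a_one_pow_n,
      one_pow]
  have hcq : c ∣ q := (Nat.Coprime.dvd_of_dvd_mul_left (hcodd.coprime_two_right) hc2q)
  have hceq : c = q := Nat.le_antisymm (Nat.le_of_dvd (by omega) hcq) hqc
  exact ⟨hceq ▸ hcm, hceq ▸ hcr⟩
lemma a_npow {d : ℕ} (t : ℕ) (s : ZMod (2 * d)) :
    (QuaternionGroup.a s) ^ t = QuaternionGroup.a ((t : ZMod (2 * d)) * s) := by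
  induction t with
  | zero => rw [pow_zero, Nat.cast_zero, zero_mul, QuaternionGroup.one_def]
  | succ t ih =>
      rw [pow_succ, ih, QuaternionGroup.a_mul_a]
      congr 1
      push_cast
      ring

lemma a_inv {d : ℕ} (s : ZMod (2 * d)) :
    (QuaternionGroup.a s)⁻¹ = QuaternionGroup.a (-s) := by
  apply inv_eq_of_mul_eq_one_right
  rw [QuaternionGroup.a_mul_a, add_neg_cancel, QuaternionGroup.one_def]

lemma a_zpow {d : ℕ} (t : ℤ) (s : ZMod (2 * d)) :
    (QuaternionGroup.a s) ^ t = QuaternionGroup.a ((t : ZMod (2 * d)) * s) := by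
  cases t with
  | ofNat t => rw [Int.ofNat_eq_coe, zpow_natCast, a_npow]; push_cast; ring_nf
  | negSucc t =>
      rw [zpow_negSucc, a_npow, a_inv]
      congr 1
      push_cast
      ring

lemma quatTargetRels {d : ℕ} (hd1 : 1 < d) (hdodd : Odd d) {m n r : ℕ}
    (hdm : d ∣ m) (hdr : d ∣ (r + 1)) :
    ((QuaternionGroup.a 2 : QuaternionGroup d) ^ m = 1) ∧
    ((QuaternionGroup.xa 0 : QuaternionGroup d) ^ (4 * n) = 1) ∧
    (QuaternionGroup.xa 0 * QuaternionGroup.a 2 * (QuaternionGroup.xa 0)⁻¹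
      = (QuaternionGroup.a 2 : QuaternionGroup d) ^ r) ∧
    Subgroup.closure ({QuaternionGroup.a 2, QuaternionGroup.xa 0} :
      Set (QuaternionGroup d)) = ⊤ := by
  haveI : NeZero d := ⟨by omega⟩
  have hp : (QuaternionGroup.a 2 : QuaternionGroup d) ^ m = 1 := by
    rw [a_npow]
    have : ((m : ZMod (2 * d)) * 2) = 0 := by
      have h0 : ((2 * m : ℕ) : ZMod (2 * d)) = 0 := by
        rw [ZMod.natCast_eq_zero_iff]
        exact mul_dvd_mul_left 2 hdm
      push_cast at h0
      linear_combination h0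
    rw [this, QuaternionGroup.one_def]
  have hq : (QuaternionGroup.xa 0 : QuaternionGroup d) ^ (4 * n) = 1 := by
    rw [pow_mul, QuaternionGroup.xa_pow_four, one_pow]
  have hinv : (QuaternionGroup.xa 0 : QuaternionGroup d)⁻¹ = QuaternionGroup.xa (d : ZMod (2*d)) := by
    apply inv_eq_of_mul_eq_one_right
    rw [QuaternionGroup.xa_mul_xa]
    have hdd : ((2 * d : ℕ) : ZMod (2 * d)) = 0 := ZMod.natCast_self _
    push_cast at hdd
    rw [QuaternionGroup.one_def]
    congr 1
    linear_combination hdd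
  have hpq : QuaternionGroup.xa 0 * QuaternionGroup.a 2 * (QuaternionGroup.xa 0)⁻¹
      = (QuaternionGroup.a 2 : QuaternionGroup d) ^ r := by
    rw [hinv, QuaternionGroup.xa_mul_a, QuaternionGroup.xa_mul_xa, a_npow]
    congr 1
    have h0 : ((2 * (r + 1) : ℕ) : ZMod (2 * d)) = 0 := by
      rw [ZMod.natCast_eq_zero_iff]
      exact mul_dvd_mul_left 2 hdr
    have hdd : ((2 * d : ℕ) : ZMod (2 * d)) = 0 := ZMod.natCast_self _
    push_cast at h0 hdd
    linear_combination hdd - h0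
  have had : (QuaternionGroup.a (d : ZMod (2*d)) : QuaternionGroup d)
      ∈ Subgroup.closure ({QuaternionGroup.a 2, QuaternionGroup.xa 0} :
        Set (QuaternionGroup d)) := by
    rw [← QuaternionGroup.xa_sq (0 : ZMod (2*d))]
    exact pow_mem (Subgroup.subset_closure (by simp)) 2
  have ha2 : (QuaternionGroup.a 2 : QuaternionGroup d)
      ∈ Subgroup.closure ({QuaternionGroup.a 2, QuaternionGroup.xa 0} :
        Set (QuaternionGroup d)) := Subgroup.subset_closure (by simp)
  have ha1 : (QuaternionGroup.a 1 : QuaternionGroup d)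
      ∈ Subgroup.closure ({QuaternionGroup.a 2, QuaternionGroup.xa 0} :
        Set (QuaternionGroup d)) := by
    have hgcd : Nat.gcd 2 d = 1 := Nat.coprime_two_left.mpr hdodd
    have hbez : (1 : ℤ) = 2 * Nat.gcdA 2 d + d * Nat.gcdB 2 d := by
      have := Nat.gcd_eq_gcd_ab 2 d
      rw [hgcd] at this
      exact_mod_cast this
    have key : (QuaternionGroup.a 2 : QuaternionGroup d) ^ (Nat.gcdA 2 d)
        * (QuaternionGroup.a (d : ZMod (2*d))) ^ (Nat.gcdB 2 d)
        = QuaternionGroup.a 1 := by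
      rw [a_zpow, a_zpow, QuaternionGroup.a_mul_a]
      congr 1
      have : ((1 : ℤ) : ZMod (2 * d)) = ((2 * Nat.gcdA 2 d + d * Nat.gcdB 2 d : ℤ) : ZMod (2*d)) := by
        exact_mod_cast congrArg (Int.cast : ℤ → ZMod (2*d)) hbez
      push_cast at this
      linear_combination -this
    rw [← key]
    exact mul_mem (zpow_mem ha2 _) (zpow_mem had _)
  have hgen : Subgroup.closure ({QuaternionGroup.a 2, QuaternionGroup.xa 0} :
      Set (QuaternionGroup d)) = ⊤ := by
    rw [eq_top_iff]
    rintro (i | i) -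
    · have : (QuaternionGroup.a i : QuaternionGroup d) = (QuaternionGroup.a 1) ^ (ZMod.val i) := by
        rw [QuaternionGroup.a_one_pow, ZMod.natCast_zmod_val]
      rw [this]
      exact pow_mem ha1 _
    · have : (QuaternionGroup.xa i : QuaternionGroup d)
          = QuaternionGroup.a (-i) * QuaternionGroup.xa 0 := by
        rw [QuaternionGroup.a_mul_xa]
        congr 1
        ring
      rw [this]
      refine mul_mem ?_ (Subgroup.subset_closure (by simp))
      have : (QuaternionGroup.a (-i) : QuaternionGroup d) = (QuaternionGroup.a 1) ^ (ZMod.val (-i)) := by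
        rw [QuaternionGroup.a_one_pow, ZMod.natCast_zmod_val]
      rw [this]
      exact pow_mem ha1 _
  exact ⟨hp, hq, hpq, hgen⟩
open Quaternion in
noncomputable def fC : ℂ →+* Quaternion ℝ where
  toFun z := ⟨z.re, z.im, 0, 0⟩
  map_one' := by ext <;> simp
  map_mul' z w := by
    show (⟨(z*w).re, (z*w).im, 0, 0⟩ : ℍ[ℝ]) = (⟨z.re, z.im, 0, 0⟩ : ℍ[ℝ]) * ⟨w.re, w.im, 0, 0⟩
    ext <;> simp [Complex.mul_re, Complex.mul_im] <;> ring
  map_zero' := by ext <;> simp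
  map_add' z w := by
    show (⟨(z+w).re, (z+w).im, 0, 0⟩ : ℍ[ℝ]) = (⟨z.re, z.im, 0, 0⟩ : ℍ[ℝ]) + ⟨w.re, w.im, 0, 0⟩
    ext <;> simp [QuaternionAlgebra.mk_add_mk]

lemma fC_injective : Function.Injective fC := by
  intro z w h
  have h1 := congrArg QuaternionAlgebra.re h
  have h2 := congrArg QuaternionAlgebra.imI h
  simp [fC] at h1 h2
  exact Complex.ext h1 h2

noncomputable def Jq : Quaternion ℝ := ⟨0, 0, 1, 0⟩

lemma Jq_mul_Jq : Jq * Jq = -1 := by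
  ext <;> simp only [Quaternion.re_mul, Quaternion.imI_mul, Quaternion.imJ_mul, Quaternion.imK_mul, Quaternion.re_neg, Quaternion.imI_neg, Quaternion.imJ_neg, Quaternion.imK_neg, Quaternion.re_one, Quaternion.imI_one, Quaternion.imJ_one, Quaternion.imK_one] <;> simp [Jq]

lemma fC_apply (z : ℂ) : fC z = ⟨z.re, z.im, 0, 0⟩ := rfl

lemma Jq_mul_fC (z : ℂ) : Jq * fC z = fC ((starRingEnd ℂ) z) * Jq := by
  ext <;> simp only [Quaternion.re_mul, Quaternion.imI_mul, Quaternion.imJ_mul, Quaternion.imK_mul] <;> simp [Jq, fC_apply] <;> ring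

lemma quatUnitsExists (d : ℕ) (hd3 : 3 ≤ d) :
    ∃ ξ η : (Quaternion ℝ)ˣ, orderOf ξ = d ∧ η ^ 4 = 1 ∧
      η * ξ * η⁻¹ = ξ⁻¹ ∧ ¬ Commute ξ η := by
  have hd0 : (d : ℕ) ≠ 0 := by omega
  set ζ : ℂ := Complex.exp (2 * Real.pi * Complex.I / d) with hζdef
  have hζ : IsPrimitiveRoot ζ d := Complex.isPrimitiveRoot_exp d hd0
  have hζne : ζ ≠ 0 := Complex.exp_ne_zero _
  have hζabs : ‖ζ‖ = 1 := by
    rw [hζdef]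
    have : (2 * Real.pi * Complex.I / d) = ((2 * Real.pi / d : ℝ) : ℂ) * Complex.I := by
      push_cast
      ring
    rw [this, Complex.norm_exp_ofReal_mul_I]
  have hζinv : ζ⁻¹ = (starRingEnd ℂ) ζ := by
    rw [Complex.inv_def]
    rw [Complex.normSq_eq_norm_sq, hζabs]
    norm_num
  set ξ : (Quaternion ℝ)ˣ :=
    ⟨fC ζ, fC ζ⁻¹, by rw [← map_mul, mul_inv_cancel₀ hζne, map_one],
      by rw [← map_mul, inv_mul_cancel₀ hζne, map_one]⟩ with hξdef
  set η : (Quaternion ℝ)ˣ :=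
    ⟨Jq, -Jq, by rw [mul_neg, Jq_mul_Jq]; norm_num, by rw [neg_mul, Jq_mul_Jq]; norm_num⟩
    with hηdef
  have hξpow : ∀ k : ℕ, (ξ ^ k : (Quaternion ℝ)ˣ) = 1 ↔ ζ ^ k = 1 := by
    intro k
    constructor
    · intro h
      have := congrArg Units.val h
      rw [Units.val_pow_eq_pow_val, Units.val_one] at this
      apply fC_injective
      rw [map_pow, map_one]
      exact this
    · intro h
      apply Units.ext
      rw [Units.val_pow_eq_pow_val, Units.val_one]
      show (fC ζ) ^ k = 1
      rw [← map_pow, h, map_one]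
  have hξord : orderOf ξ = d := by
    have h1 : ξ ^ d = 1 := (hξpow d).mpr (hζ.pow_eq_one)
    have h2 : orderOf ξ ∣ d := orderOf_dvd_of_pow_eq_one h1
    have h3 : d ∣ orderOf ξ := by
      apply hζ.dvd_of_pow_eq_one
      rw [← hξpow]
      exact pow_orderOf_eq_one ξ
    exact Nat.dvd_antisymm h2 h3
  have hη4 : η ^ 4 = 1 := by
    apply Units.ext
    rw [Units.val_pow_eq_pow_val, Units.val_one]
    show Jq ^ 4 = 1
    rw [show (4:ℕ) = 2*2 from rfl, pow_mul]
    rw [sq, sq, Jq_mul_Jq]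
    norm_num
  have hconj : η * ξ * η⁻¹ = ξ⁻¹ := by
    apply Units.ext
    show Jq * fC ζ * (-Jq) = fC ζ⁻¹
    rw [Jq_mul_fC, mul_neg, mul_assoc, Jq_mul_Jq, mul_neg, mul_one, neg_neg, hζinv]
  have hncomm : ¬ Commute ξ η := by
    intro hcomm
    have h1 : fC ζ * Jq = Jq * fC ζ := congrArg Units.val hcomm
    rw [Jq_mul_fC] at h1
    have h2 : fC ζ * Jq * Jq = fC ((starRingEnd ℂ) ζ) * Jq * Jq := by rw [h1]
    rw [mul_assoc, mul_assoc, Jq_mul_Jq, mul_neg, mul_neg, mul_one, mul_one, neg_inj] at h2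
    have h3 : ζ = (starRingEnd ℂ) ζ := fC_injective h2
    have h4 : ζ.im = 0 := by
      have := congrArg Complex.im h3
      rw [Complex.conj_im] at this
      linarith
    have harg : (2 * Real.pi * Complex.I / d) = ((2 * Real.pi / d : ℝ) : ℂ) * Complex.I := by
      push_cast
      ring
    have him : ζ.im = Real.sin (2 * Real.pi / d) := by
      rw [hζdef, harg, Complex.exp_ofReal_mul_I_im]
    have hd0' : (0:ℝ) < d := by positivity
    have hsin : 0 < Real.sin (2 * Real.pi / d) := by
      apply Real.sin_pos_of_pos_of_lt_pi
      · positivity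
      · rw [div_lt_iff₀ hd0']
        have hd3' : (3:ℝ) ≤ d := by exact_mod_cast hd3
        nlinarith [Real.pi_pos]
    rw [him] at h4
    linarith
  exact ⟨ξ, η, hξord, hη4, hconj, hncomm⟩

def metarels (M N R : ℕ) : Set (FreeGroup Bool) :=
  {FreeGroup.of true ^ M, FreeGroup.of false ^ N,
   FreeGroup.of false * FreeGroup.of true * (FreeGroup.of false)⁻¹ * (FreeGroup.of true ^ R)⁻¹}

lemma helperHom {K : Type*} [Group K] {M N R : ℕ} {p q : K}
    (hp : p ^ M = 1) (hq : q ^ N = 1) (hpq : q * p * q⁻¹ = p ^ R) :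
    ∃ φ : PresentedGroup (metarels M N R) →* K,
      φ (PresentedGroup.of true) = p ∧ φ (PresentedGroup.of false) = q := by
  have h : ∀ ρ ∈ metarels M N R,
      FreeGroup.lift (fun b : Bool => bif b then p else q) ρ = 1 := by
    rintro ρ (rfl | rfl | rfl) <;>
      simp only [map_pow, map_mul, map_inv, FreeGroup.lift_apply_of, cond_true, cond_false]
    · exact hp
    · exact hq
    · rw [hpq]; group
  exact ⟨PresentedGroup.toGroup h, PresentedGroup.toGroup.of h, PresentedGroup.toGroup.of h⟩

lemma pg_rel_one {M N R : ℕ} {ρ : FreeGroup Bool} (hρ : ρ ∈ metarels M N R) :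
    PresentedGroup.mk (metarels M N R) ρ = 1 := by
  exact (QuotientGroup.eq_one_iff ρ).mpr (Subgroup.subset_normalClosure hρ)

lemma pg_closure (M N R : ℕ) :
    Subgroup.closure {(PresentedGroup.of true : PresentedGroup (metarels M N R)),
      PresentedGroup.of false} = ⊤ := by
  have h := PresentedGroup.closure_range_of (metarels M N R)
  rw [← h]
  congr 1
  ext z
  simp [Bool.exists_bool, or_comm]

lemma existsHom {G H : Type*} [Group G] [Group H] {M N R : ℕ} (hM : 0 < M) (hN : 0 < N)
    {u v : G} (hu : u ^ M = 1) (hv : v ^ N = 1) (hrel : v * u * v⁻¹ = u ^ R)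
    (hgen : Subgroup.closure {u, v} = ⊤) (hcard : Nat.card G = M * N)
    {p q : H} (hp : p ^ M = 1) (hq : q ^ N = 1) (hpq : q * p * q⁻¹ = p ^ R) :
    ∃ χ : G →* H, χ u = p ∧ χ v = q := by
  obtain ⟨Φ, hΦt, hΦf⟩ := helperHom hu hv hrel (M := M) (N := N) (R := R)
  set x : PresentedGroup (metarels M N R) := PresentedGroup.of true
  set y : PresentedGroup (metarels M N R) := PresentedGroup.of false
  have hx : x ^ M = 1 := by
    have := pg_rel_one (M := M) (N := N) (R := R) (Set.mem_insert _ _)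
    simpa [x, PresentedGroup.of] using this
  have hy : y ^ N = 1 := by
    have := pg_rel_one (M := M) (N := N) (R := R)
      (Set.mem_insert_of_mem _ (Set.mem_insert _ _))
    simpa [y, PresentedGroup.of] using this
  have hxy : y * x * y⁻¹ = x ^ R := by
    have := pg_rel_one (M := M) (N := N) (R := R)
      (Set.mem_insert_of_mem _ (Set.mem_insert_of_mem _ rfl))
    simp only [map_mul, map_inv, map_pow] at this
    have h2 : (y * x * y⁻¹) * (x ^ R)⁻¹ = 1 := by
      simpa [x, y, PresentedGroup.of] using this
    exact mul_inv_eq_one.mp h2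
  have hcl := pg_closure M N R
  have hΦsurj : Function.Surjective Φ := by
    rw [← MonoidHom.range_eq_top]
    have h2 : Subgroup.closure {u, v} ≤ Φ.range := by
      rw [Subgroup.closure_le]
      rintro z (rfl | rfl)
      · exact ⟨x, hΦt⟩
      · exact ⟨y, hΦf⟩
    rw [hgen] at h2
    exact top_le_iff.mp h2
  obtain ⟨hfin, hle⟩ := cardLe hM hN hx hy hxy hcl
  have hcard2 : Nat.card (PresentedGroup (metarels M N R)) = Nat.card G := by
    have h3 := Nat.card_le_card_of_surjective _ hΦsurj
    omega
  have hbij : Function.Bijective Φ :=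
    (Nat.bijective_iff_surjective_and_card Φ).mpr ⟨hΦsurj, hcard2⟩
  set E := MulEquiv.ofBijective Φ hbij
  obtain ⟨ψ, hψt, hψf⟩ := helperHom hp hq hpq (M := M) (N := N) (R := R)
  refine ⟨ψ.comp E.symm.toMonoidHom, ?_, ?_⟩
  · have : E.symm u = x := by
      rw [MulEquiv.symm_apply_eq]; exact hΦt.symm
    simp [MonoidHom.comp_apply, this, hψt]
    exact hψt
  · have : E.symm v = y := by
      rw [MulEquiv.symm_apply_eq]; exact hΦf.symm
    simp [MonoidHom.comp_apply, this, hψf]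
    exact hψf

lemma surj_of_gen {G H : Type*} [Group G] [Group H] {u v : G} 
    (hgen : Subgroup.closure {u, v} = ⊤) (χ : G →* H)
    (h : Subgroup.closure {χ u, χ v} = ⊤) : Function.Surjective χ := by
  rw [← MonoidHom.range_eq_top, MonoidHom.range_eq_map, ← hgen, MonoidHom.map_closure,
    Set.image_pair]
  exact h

/-- A finite group has periodic cohomology iff every abelian subgroup is cyclic. -/
def HasPeriodicCohomology (G : Type*) [Group G] : Prop :=
  ∀ H : Subgroup G, (∀ x y : H, x * y = y * x) → IsCyclic H

/-- A binary polyhedral group is a finite non-cyclic subgroup of the unit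
quaternions. -/
def IsBinaryPolyhedral (H : Type*) [Group H] : Prop :=
  ∃ S : Subgroup (Quaternion ℝ)ˣ, Finite S ∧ ¬ IsCyclic S ∧ Nonempty (H ≃* S)

/-- A surjection `f` onto a binary polyhedral group is a *maximal* binary
polyhedral quotient if it factors through no other binary polyhedral quotient,
i.e. every binary polyhedral quotient whose kernel is contained in `ker f` has
kernel equal to `ker f`. -/
def IsMaximalBPQuotient {G : Type} [Group G] {H : Type} [Group H]
    (f : G →* H) : Prop :=
  ∀ (H' : Type) [Group H'], IsBinaryPolyhedral H' →
    ∀ g' : G →* H', Function.Surjective g' → g'.ker ≤ f.ker → g'.ker = f.ker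

/-- Let `G = C_m ⋊_{(r)} C_{4n}` (m odd) have periodic cohomology and surject
onto `Q_{4a}` and `Q_{4b}` with `a, b > 1` odd.  Then `G` surjects onto `Q_{4d}`
for `d = lcm(a,b)`, and `G` has at most one maximal binary polyhedral quotient
up to equivalence (equality of kernels). -/
theorem stmt19 (G : Type) [Group G] (hG : HasPeriodicCohomology G)
    (m n r : ℕ) (hn : 1 ≤ n) (hm : Odd m) (hcop : Nat.Coprime m (4 * n))
    (hr : r ^ (4 * n) ≡ 1 [MOD m])
    (u v : G) (hu : orderOf u = m) (hv : orderOf v = 4 * n)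
    (hrel : v * u * v⁻¹ = u ^ r)
    (hgen : Subgroup.closure {u, v} = ⊤)
    (hcard : Nat.card G = m * (4 * n))
    (a b : ℕ) (ha : 1 < a) (hb : 1 < b) (hao : Odd a) (hbo : Odd b)
    (f₁ : G →* QuaternionGroup a) (hf₁ : Function.Surjective f₁)
    (f₂ : G →* QuaternionGroup b) (hf₂ : Function.Surjective f₂) :
    (∃ g : G →* QuaternionGroup (Nat.lcm a b), Function.Surjective g) ∧
    (∀ (H₁ : Type) [Group H₁] (H₂ : Type) [Group H₂],
      IsBinaryPolyhedral H₁ → IsBinaryPolyhedral H₂ →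
      ∀ (g₁ : G →* H₁) (g₂ : G →* H₂),
        Function.Surjective g₁ → Function.Surjective g₂ →
        IsMaximalBPQuotient g₁ → IsMaximalBPQuotient g₂ →
        g₁.ker = g₂.ker) := by
  have hm1 : 0 < m := hm.pos
  have hn1 : 0 < 4 * n := by omega
  haveI hGfin : Finite G := by
    apply Nat.finite_of_card_ne_zero
    rw [hcard]
    positivity
  have hum : u ^ m = 1 := by rw [← hu]; exact pow_orderOf_eq_one u
  have hvn : v ^ (4 * n) = 1 := by rw [← hv]; exact pow_orderOf_eq_one v
  -- helper : for a divisor data d, get a surjection onto QuaternionGroup d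
  have mkSurj : ∀ d : ℕ, 1 < d → Odd d → d ∣ m → d ∣ (r + 1) →
      ∃ g : G →* QuaternionGroup d, Function.Surjective g := by
    intro d hd1 hdodd hdm hdr
    obtain ⟨hp, hq, hpq, hgenQ⟩ := quatTargetRels hd1 hdodd hdm hdr (n := n)
    obtain ⟨χ, hχu, hχv⟩ := existsHom hm1 hn1 hum hvn hrel hgen hcard hp hq hpq
    refine ⟨χ, surj_of_gen hgen χ ?_⟩
    rw [hχu, hχv]
    exact hgenQ
  constructor
  · -- part 1
    obtain ⟨ham, har⟩ := quatQuot hm hn hu hv hrel hgen ha f₁ hf₁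
    obtain ⟨hbm, hbr⟩ := quatQuot hm hn hu hv hrel hgen hb f₂ hf₂
    have hdm : Nat.lcm a b ∣ m := Nat.lcm_dvd ham hbm
    have hdr : Nat.lcm a b ∣ (r + 1) := Nat.lcm_dvd har hbr
    have hd0 : 0 < Nat.lcm a b := Nat.pos_of_dvd_of_pos hdm hm1
    have hd1 : 1 < Nat.lcm a b :=
      lt_of_lt_of_le ha (Nat.le_of_dvd hd0 (Nat.dvd_lcm_left a b))
    exact mkSurj _ hd1 (hm.of_dvd_nat hdm) hdm hdr
  · -- part 2
    intro H₁ _ H₂ _ hbp₁ hbp₂ g₁ g₂ hg₁ hg₂ hmax₁ hmax₂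
    -- analyze an arbitrary BP quotient
    have analyze : ∀ (H : Type) [Group H], ∀ (g : G →* H), Function.Surjective g →
        IsBinaryPolyhedral H → ∃ c : ℕ, 1 < c ∧ c ∣ m ∧ c ∣ (r + 1) ∧
          g.ker = Subgroup.closure {u ^ c, v ^ 4} := by
      intro H _ g hg hbp
      obtain ⟨S, hSfin, hSnc, ⟨e⟩⟩ := hbp
      set φ : G →* (Quaternion ℝ)ˣ := S.subtype.comp (e.toMonoidHom.comp g) with hφdef
      have hφval : ∀ w, φ w = ((e (g w) : S) : (Quaternion ℝ)ˣ) := fun w => rfl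
      have hφker : φ.ker = g.ker := by
        ext w
        simp only [MonoidHom.mem_ker, hφval]
        constructor
        · intro h
          have h2 : e (g w) = 1 := by
            apply Subtype.ext
            rw [h]
            rfl
          have := congrArg e.symm h2
          rw [MulEquiv.symm_apply_apply, map_one] at this
          exact this
        · intro h
          rw [h, map_one]
          rfl
      have hφrange : φ.range = S := by
        ext w
        constructor
        · rintro ⟨g', rfl⟩
          exact SetLike.coe_mem (e (g g'))
        · intro hw
          obtain ⟨g', hg'⟩ := hg (e.symm ⟨w, hw⟩)
          refine ⟨g', ?_⟩
          rw [hφval, hg', MulEquiv.apply_symm_apply]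
      have hφnc : ¬ IsCyclic φ.range := by
        rw [hφrange]
        exact hSnc
      obtain ⟨hc1, hcm, hcr, hker⟩ := master hm hn hu hv hrel hgen φ hφnc
      exact ⟨orderOf (φ u), hc1, hcm, hcr, by rw [← hφker, hker]⟩
    obtain ⟨c₁, hc₁1, hc₁m, hc₁r, hker₁⟩ := analyze H₁ g₁ hg₁ hbp₁
    obtain ⟨c₂, hc₂1, hc₂m, hc₂r, hker₂⟩ := analyze H₂ g₂ hg₂ hbp₂
    set d := Nat.lcm c₁ c₂ with hddef
    have hdm : d ∣ m := Nat.lcm_dvd hc₁m hc₂m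
    have hdr : d ∣ (r + 1) := Nat.lcm_dvd hc₁r hc₂r
    have hd0 : 0 < d := Nat.pos_of_dvd_of_pos hdm hm1
    have hd1 : 1 < d := lt_of_lt_of_le hc₁1 (Nat.le_of_dvd hd0 (Nat.dvd_lcm_left c₁ c₂))
    have hdodd : Odd d := hm.of_dvd_nat hdm
    have hd3 : 3 ≤ d := by
      rcases Nat.odd_iff.mp hdodd with h
      omega
    obtain ⟨ξ, η, hξord, hη4, hconjξ, hncommξ⟩ := quatUnitsExists d hd3
    have hξm : ξ ^ m = 1 := by
      apply orderOf_dvd_iff_pow_eq_one.mp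
      rw [hξord]
      exact hdm
    have hηn : η ^ (4 * n) = 1 := by
      rw [pow_mul, hη4, one_pow]
    have hξr : η * ξ * η⁻¹ = ξ ^ r := by
      rw [hconjξ]
      have h1 : ξ ^ (r + 1) = 1 := by
        apply orderOf_dvd_iff_pow_eq_one.mp
        rw [hξord]
        exact hdr
      rw [pow_succ] at h1
      exact (eq_inv_of_mul_eq_one_left h1).symm
    obtain ⟨χ, hχu, hχv⟩ := existsHom hm1 hn1 hum hvn hrel hgen hcard hξm hηn hξr
    have hχrange : χ.range = Subgroup.closure {ξ, η} := by
      rw [MonoidHom.range_eq_map, ← hgen, MonoidHom.map_closure, Set.image_pair, hχu, hχv]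
    have hχnc : ¬ IsCyclic χ.range := by
      intro hcyc
      apply hncommξ
      rw [hχrange] at hcyc
      letI := hcyc.commGroup
      have hξmem : ξ ∈ Subgroup.closure ({ξ, η} : Set (Quaternion ℝ)ˣ) :=
        Subgroup.subset_closure (by simp)
      have hηmem : η ∈ Subgroup.closure ({ξ, η} : Set (Quaternion ℝ)ˣ) :=
        Subgroup.subset_closure (by simp)
      have := mul_comm (⟨ξ, hξmem⟩ : Subgroup.closure ({ξ, η} : Set (Quaternion ℝ)ˣ))
        ⟨η, hηmem⟩
      have h2 := congrArg (Subtype.val) this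
      exact h2
    obtain ⟨hd1', hdm', hdr', hkerχ⟩ := master hm hn hu hv hrel hgen χ hχnc
    rw [hχu, hξord] at hkerχ
    -- the BP quotient onto the range of χ
    haveI hχrangefin : Finite χ.range :=
      Finite.of_surjective χ.rangeRestrict χ.rangeRestrict_surjective
    have hbpr : IsBinaryPolyhedral ↥(χ.range) := ⟨χ.range, hχrangefin, hχnc, ⟨MulEquiv.refl _⟩⟩
    have hkerres : χ.rangeRestrict.ker = χ.ker := MonoidHom.ker_rangeRestrict χ
    have hKle : ∀ c : ℕ, c ∣ d →
        Subgroup.closure {u ^ d, v ^ 4} ≤ Subgroup.closure {u ^ c, v ^ 4} := by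
      intro c hc
      rw [Subgroup.closure_le]
      rintro w (rfl | rfl)
      · obtain ⟨t, ht⟩ := hc
        rw [ht, pow_mul]
        exact Subgroup.pow_mem _ (Subgroup.subset_closure (by simp)) t
      · exact Subgroup.subset_closure (by simp)
    have hle₁ : χ.rangeRestrict.ker ≤ g₁.ker := by
      rw [hkerres, hkerχ, hker₁]
      exact hKle c₁ (Nat.dvd_lcm_left c₁ c₂)
    have hle₂ : χ.rangeRestrict.ker ≤ g₂.ker := by
      rw [hkerres, hkerχ, hker₂]
      exact hKle c₂ (Nat.dvd_lcm_right c₁ c₂)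
    have he₁ := hmax₁ ↥(χ.range) hbpr χ.rangeRestrict χ.rangeRestrict_surjective hle₁
    have he₂ := hmax₂ ↥(χ.range) hbpr χ.rangeRestrict χ.rangeRestrict_surjective hle₂
    rw [← he₁, ← he₂]
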